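/- Let G = (V,E) be a finite simple graph, let b : E → ℝ be any edge weight function, and let L be the associated weighted Laplacian matrix. If S ⊆ V is not a dominating set of G, then there exists a nonzero vector θ : V → ℝ such that (Lθ)_j = 0 for every j ∈ S, and for every edge {u,v} ∈ E with θ_u ≠ θ_v, neither u nor v belongs to S. (Hence a set of protected buses admitting no undetectable attack must be a dominating set.) -/
import Mathlib


open Matrix

/-- `D` is a dominating set of `G`: every vertex not in `D` is adjacent to a vertex of `D`. -/
def IsDominating {V : Type*} (G : SimpleGraph V) (D : Set V) : Prop :=
  ∀ v ∉ D, ∃ u ∈ D, G.Adj v u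

/-- The weighted Laplacian of `G` with edge weights `b`: `L u v = -b({u,v})` for adjacent
`u ≠ v`, `0` for nonadjacent `u ≠ v`, and `L u u = ∑_{w ~ u} b({u,w})`. -/
noncomputable def weightedLaplacian {V : Type*} [Fintype V] [DecidableEq V]
    (G : SimpleGraph V) [DecidableRel G.Adj] (b : Sym2 V → ℝ) : Matrix V V ℝ :=
  Matrix.of fun u v =>
    if u = v then ∑ w ∈ G.neighborFinset u, b s(u, w)
    else if G.Adj u v then -b s(u, v) else 0

/-- if `S` is not a dominating set of `G`, then for any edge weights `b`
there is a nonzero vector `θ` of fictitious phasors such that `(Lθ)_j = 0` for every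
`j ∈ S` and every edge `{u,v}` with `θ_u ≠ θ_v` has both endpoints outside `S`
(an undetectable attack avoiding all protected buses). -/
theorem not_dominating_admits_undetectable_attack {V : Type*} [Fintype V] [DecidableEq V]
    (G : SimpleGraph V) [DecidableRel G.Adj] (b : Sym2 V → ℝ) (S : Set V)
    (hS : ¬ IsDominating G S) :
    ∃ θ : V → ℝ, θ ≠ 0 ∧ (∀ j ∈ S, (weightedLaplacian G b *ᵥ θ) j = 0) ∧
      ∀ u v, G.Adj u v → θ u ≠ θ v → u ∉ S ∧ v ∉ S := by
  simp only [IsDominating, not_forall, not_exists] at hS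
  obtain ⟨v₀, hv₀S, hnb⟩ := hS
  push_neg at hnb
  refine ⟨fun x => if x = v₀ then 1 else 0, ?_, ?_, ?_⟩
  · intro h
    have := congrFun h v₀
    simp at this
  · intro j hjS
    have hjv : j ≠ v₀ := fun h => hv₀S (h ▸ hjS)
    have hadj : ¬ G.Adj j v₀ := fun h => (hnb j hjS) h.symm
    simp only [mulVec, dotProduct, mul_ite, mul_one, mul_zero]
    rw [Finset.sum_ite_eq' Finset.univ v₀]
    simp [weightedLaplacian, hjv, hadj]
  · intro u v hadj hne
    by_cases hu : u = v₀ <;> by_cases hv : v = v₀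
    · exact absurd (hv ▸ hu) hadj.ne
    · subst hu
      exact ⟨hv₀S, fun hvS => hnb v hvS hadj⟩
    · subst hv
      exact ⟨fun huS => hnb u huS hadj.symm, hv₀S⟩
    · simp [hu, hv] at hne
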